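/- Let δ be a limit ordinal, e a club of δ, S ⊆ nacc(e) a set of limit ordinals, and for each α ∈ S let D_α be a club of α. Let E = e ∪ ⋃_{α ∈ S} {β ∈ D_α : β ≥ sup(e ∩ α)}. Then E is a club of δ. Moreover, if γ is an ordinal with otp(e) ≤ γ and ρ is an additively indecomposable limit ordinal such that otp(D_α) < ρ for every α ∈ S, then otp(E) ≤ ρ · γ (ordinal multiplication, γ copies of ρ). -/

import Mathlib

noncomputable section

/-- The order type of a set of ordinals (meaningful when `C` is small, i.e. bounded). -/
noncomputable def otp (C : Set Ordinal.{0}) : Ordinal.{0} := by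
  classical
  exact if h : Small.{0} C then
    letI := h
    haveI : IsWellOrder (Shrink C)
        (fun x y => ((equivShrink C).symm x : Ordinal) < ((equivShrink C).symm y : Ordinal)) :=
      RelEmbedding.isWellOrder
        (⟨⟨fun x => ((equivShrink C).symm x : Ordinal),
            fun a b hab => (equivShrink C).symm.injective (Subtype.coe_injective hab)⟩,
          Iff.rfl⟩ :
          (fun x y : Shrink C =>
              ((equivShrink C).symm x : Ordinal) < ((equivShrink C).symm y : Ordinal)) ↪r
            ((· < ·) : Ordinal → Ordinal → Prop))
    Ordinal.type
      (fun x y : Shrink C =>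
        ((equivShrink C).symm x : Ordinal) < ((equivShrink C).symm y : Ordinal))
  else 0

/-- `C` is closed in `δ`: any supremum of a nonempty subset of `C` that is `< δ` lies in `C`. -/
def IsClosedIn (C : Set Ordinal.{0}) (δ : Ordinal.{0}) : Prop :=
  ∀ s ⊆ C, s.Nonempty → sSup s < δ → sSup s ∈ C

/-- `C` is a club (closed unbounded) subset of `δ`. -/
def IsClubIn (C : Set Ordinal.{0}) (δ : Ordinal.{0}) : Prop :=
  C ⊆ Set.Iio δ ∧ (∀ β < δ, ∃ γ ∈ C, β ≤ γ) ∧ IsClosedIn C δ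

/-- `S` is stationary in `δ`: it meets every club of `δ`. -/
def IsStationaryIn (S : Set Ordinal.{0}) (δ : Ordinal.{0}) : Prop :=
  ∀ C, IsClubIn C δ → (S ∩ C).Nonempty

/-- The accumulation points of `C` that belong to `C`. -/
def accSet (C : Set Ordinal.{0}) : Set Ordinal.{0} :=
  {β ∈ C | β = sSup (C ∩ Set.Iio β)}

/-- The non-accumulation points of `C`. -/
def naccSet (C : Set Ordinal.{0}) : Set Ordinal.{0} := C \ accSet C

/-- `S_κ^δ`: the set of ordinals below `δ` of cofinality `κ`. -/
def cofSet (κ : Cardinal.{0}) (δ : Ordinal.{0}) : Set Ordinal.{0} :=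
  {α | α < δ ∧ α.cof = κ}

def srel (C : Set Ordinal.{0}) [Small.{0} C] : Shrink C → Shrink C → Prop :=
  fun x y => ((equivShrink C).symm x : Ordinal) < ((equivShrink C).symm y : Ordinal)

instance srel_wo (C : Set Ordinal.{0}) [Small.{0} C] : IsWellOrder (Shrink C) (srel C) :=
  RelEmbedding.isWellOrder
    (⟨⟨fun x => ((equivShrink C).symm x : Ordinal),
        fun a b hab => (equivShrink C).symm.injective (Subtype.coe_injective hab)⟩,
      Iff.rfl⟩ : srel C ↪r ((· < ·) : Ordinal → Ordinal → Prop))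

lemma otp_eq (C : Set Ordinal.{0}) [h : Small.{0} C] : otp C = Ordinal.type (srel C) := by
  rw [otp, dif_pos h]; rfl

def idx (C : Set Ordinal.{0}) [Small.{0} C] (x : C) : Ordinal :=
  Ordinal.typein (srel C) (equivShrink C x)

lemma idx_lt_otp (C : Set Ordinal.{0}) [Small.{0} C] (x : C) : idx C x < otp C := by
  rw [otp_eq]; exact Ordinal.typein_lt_type _ _

lemma idx_lt_idx (C : Set Ordinal.{0}) [Small.{0} C] {x y : C}
    (h : (x : Ordinal) < (y : Ordinal)) : idx C x < idx C y := by
  rw [idx, idx, Ordinal.typein_lt_typein]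
  show ((equivShrink C).symm (equivShrink C x) : Ordinal) <
    ((equivShrink C).symm (equivShrink C y) : Ordinal)
  simpa using h

lemma otp_le_of {C : Set Ordinal.{0}} [Small.{0} C] {b : Ordinal} {f : Ordinal → Ordinal}
    (h1 : ∀ x ∈ C, ∀ y ∈ C, x < y → f x < f y) (h2 : ∀ x ∈ C, f x < b) :
    otp C ≤ b := by
  rw [otp_eq]
  haveI : IsWellOrder b.ToType (· < ·) := isWellOrder_lt
  have emb : srel C ↪r ((· < ·) : b.ToType → b.ToType → Prop) :=
    RelEmbedding.ofMonotone
      (fun x => Ordinal.ToType.mk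
        ⟨f ((equivShrink C).symm x : Ordinal), h2 _ ((equivShrink C).symm x).2⟩)
      (fun p q hpq => by
        have h := h1 _ ((equivShrink C).symm p).2 _ ((equivShrink C).symm q).2 hpq
        show Ordinal.ToType.mk _ < Ordinal.ToType.mk _
        rw [OrderIso.lt_iff_lt]
        exact h)
  have h3 : Ordinal.type (srel C) ≤ Ordinal.type ((· < ·) : b.ToType → b.ToType → Prop) :=
    emb.ordinal_type_le
  rwa [Ordinal.type_toType b] at h3

lemma mul_add_lt {ρ j c j' : Ordinal} (hc : c < ρ) (hj : j < j') :
    ρ * j + c < ρ * j' :=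
  calc ρ * j + c < ρ * j + ρ := add_lt_add_right hc _
    _ = ρ * Order.succ j := (Ordinal.mul_succ ρ j).symm
    _ ≤ ρ * j' := mul_le_mul_right (Order.succ_le_of_lt hj) ρ

/-- Gluing clubs of nonaccumulation points onto a club: the result is a club,
with the corresponding order-type bound. -/
theorem stmt_10 (δ : Ordinal) (hδ : Order.IsSuccLimit δ)
    (e : Set Ordinal) (he : IsClubIn e δ)
    (S : Set Ordinal) (hSe : S ⊆ naccSet e) (hSlim : ∀ α ∈ S, Order.IsSuccLimit α)
    (D : Ordinal → Set Ordinal) (hD : ∀ α ∈ S, IsClubIn (D α) α)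
    (E : Set Ordinal)
    (hE : E = e ∪ ⋃ α ∈ S, {β ∈ D α | sSup (e ∩ Set.Iio α) ≤ β}) :
    IsClubIn E δ ∧
      ∀ γ ρ : Ordinal, otp e ≤ γ → Order.IsSuccLimit ρ →
        (∀ a < ρ, ∀ b < ρ, a + b < ρ) → (∀ α ∈ S, otp (D α) < ρ) →
        otp E ≤ ρ * γ := by
  classical
  obtain ⟨heIio, heUnb, heCl⟩ := he
  have hSsubE : S ⊆ e := fun α hα => (hSe hα).1
  have hEmem : ∀ y, y ∈ E ↔
      y ∈ e ∨ ∃ α, α ∈ S ∧ y ∈ D α ∧ sSup (e ∩ Set.Iio α) ≤ y := by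
    intro y
    rw [hE]
    simp only [Set.mem_union, Set.mem_iUnion, Set.mem_setOf_eq, exists_prop]
  have heE : e ⊆ E := by intro x hx; exact (hEmem x).2 (Or.inl hx)
  have hs0lt : ∀ α ∈ S, sSup (e ∩ Set.Iio α) < α := by
    intro α hα
    have h1 : sSup (e ∩ Set.Iio α) ≤ α := csSup_le' (fun x hx => hx.2.le)
    rcases h1.lt_or_eq with h | h
    · exact h
    · exact absurd ⟨hSsubE hα, h.symm⟩ (hSe hα).2
  have hle_s0 : ∀ α, ∀ β ∈ e, β < α → β ≤ sSup (e ∩ Set.Iio α) := by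
    intro α β hβ hβα
    exact le_csSup ⟨α, fun x hx => hx.2.le⟩ ⟨hβ, hβα⟩
  have hDlt : ∀ α ∈ S, ∀ y ∈ D α, y < α := fun α hα y hy => (hD α hα).1 hy
  have huniq : ∀ α ∈ S, ∀ α' ∈ S, ∀ y,
      (y ∈ D α ∧ sSup (e ∩ Set.Iio α) ≤ y) →
      (y ∈ D α' ∧ sSup (e ∩ Set.Iio α') ≤ y) → α = α' := by
    rintro α hα α' hα' y ⟨hyD, hyt⟩ ⟨hyD', hyt'⟩
    by_contra hne
    rcases lt_or_gt_of_ne hne with h | h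
    · exact absurd ((hle_s0 α' α (hSsubE hα) h).trans hyt') (not_le.2 (hDlt α hα y hyD))
    · exact absurd ((hle_s0 α α' (hSsubE hα') h).trans hyt) (not_le.2 (hDlt α' hα' y hyD'))
  have hEIio : E ⊆ Set.Iio δ := by
    intro y hy
    rcases (hEmem y).1 hy with h | ⟨α, hα, hyD, -⟩
    · exact heIio h
    · exact lt_trans (hDlt α hα y hyD) (heIio (hSsubE hα))
  constructor
  · refine ⟨hEIio, ?_, ?_⟩
    · intro β hβ
      obtain ⟨c, hc, hbc⟩ := heUnb β hβ
      exact ⟨c, heE hc, hbc⟩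
    · -- closedness
      intro s hsE hsne hsδ
      by_cases hσs : sSup s ∈ s
      · exact hsE hσs
      have hbdd : BddAbove s := ⟨δ, fun x hx => (hEIio (hsE hx)).le⟩
      have hslt : ∀ y ∈ s, y < sSup s :=
        fun y hy => (le_csSup hbdd hy).lt_of_ne (fun h => hσs (h ▸ hy))
      have hcof : ∀ b < sSup s, ∃ y ∈ s, b < y :=
        fun b hb => (lt_csSup_iff hbdd hsne).1 hb
      by_cases hc1 : ∀ b < sSup s, ∃ y ∈ s ∩ e, b < y
      · obtain ⟨y0, hy0⟩ := hsne
        obtain ⟨y, hy, -⟩ := hc1 y0 (hslt y0 hy0)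
        have hne' : (s ∩ e).Nonempty := ⟨y, hy⟩
        have heq : sSup (s ∩ e) = sSup s := by
          apply le_antisymm (csSup_le_csSup hbdd hne' Set.inter_subset_left)
          by_contra h
          push_neg at h
          obtain ⟨z, hz, hlt⟩ := hc1 _ h
          exact absurd (le_csSup ⟨δ, fun x hx => (hEIio (hsE hx.1)).le⟩ hz) (not_le.2 hlt)
        have := heCl (s ∩ e) Set.inter_subset_right hne' (heq ▸ hsδ)
        rw [← heq]
        exact heE this
      · push_neg at hc1
        obtain ⟨b, hbσ, hbound⟩ := hc1
        have hkey : ∀ y ∈ s, b < y →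
            ∃ α, α ∈ S ∧ y ∈ D α ∧ sSup (e ∩ Set.Iio α) ≤ y := by
          intro y hy hby
          rcases (hEmem y).1 (hsE hy) with hye | h
          · exact absurd (hbound y ⟨hy, hye⟩) (not_le.2 hby)
          · exact h
        by_cases hc2 : ∃ α, α ∈ S ∧
            (∃ y ∈ s, b < y ∧ y ∈ D α ∧ sSup (e ∩ Set.Iio α) ≤ y) ∧ sSup s ≤ α
        · obtain ⟨α, hαS, ⟨y1, hy1s, hy1b, hy1D, hy1t⟩, hσα⟩ := hc2
          set c := max b (sSup (e ∩ Set.Iio α)) with hcdef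
          have hcσ : c < sSup s := max_lt hbσ (lt_of_le_of_lt hy1t (hslt y1 hy1s))
          set s' := {y ∈ s | c < y} with hs'def
          have hs'tail : ∀ y ∈ s', y ∈ D α ∧ sSup (e ∩ Set.Iio α) ≤ y := by
            rintro y ⟨hys, hcy⟩
            obtain ⟨α', hα'S, hy'D, hy't⟩ :=
              hkey y hys (lt_of_le_of_lt (le_max_left _ _) hcy)
            rcases eq_or_ne α' α with rfl | hne
            · exact ⟨hy'D, hy't⟩
            exfalso
            rcases hne.lt_or_gt with h | h
            · have h1 : α' ≤ sSup (e ∩ Set.Iio α) := hle_s0 α α' (hSsubE hα'S) h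
              have h2 : y < α' := hDlt α' hα'S y hy'D
              exact absurd (h2.trans_le (h1.trans (le_max_right _ _))) (not_lt.2 hcy.le)
            · have h1 : α ≤ sSup (e ∩ Set.Iio α') := hle_s0 α' α (hSsubE hαS) h
              have h2 : y < α := lt_of_lt_of_le (hslt y hys) hσα
              exact absurd (h1.trans hy't) (not_le.2 h2)
          have hs'ne : s'.Nonempty := by
            obtain ⟨y, hy, hcy⟩ := hcof c hcσ
            exact ⟨y, hy, hcy⟩
          have hs'bdd : BddAbove s' := ⟨δ, fun x hx => (hEIio (hsE hx.1)).le⟩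
          have hsup' : sSup s' = sSup s := by
            apply le_antisymm (csSup_le_csSup hbdd hs'ne (fun y hy => hy.1))
            by_contra h
            push_neg at h
            obtain ⟨y, hy, hlt⟩ := hcof (max (sSup s') c) (max_lt h hcσ)
            have hys' : y ∈ s' := ⟨hy, lt_of_le_of_lt (le_max_right _ _) hlt⟩
            exact absurd (le_csSup hs'bdd hys')
              (not_le.2 (lt_of_le_of_lt (le_max_left _ _) hlt))
          rcases hσα.lt_or_eq with hlt | heqα
          · have hmem : sSup s' ∈ D α :=
              (hD α hαS).2.2 s' (fun y hy => (hs'tail y hy).1) hs'ne (hsup' ▸ hlt)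
            have htail : sSup (e ∩ Set.Iio α) ≤ sSup s := by
              obtain ⟨y, hy⟩ := hs'ne
              exact (hs'tail y hy).2.trans (le_csSup hbdd hy.1)
            exact (hEmem _).2 (Or.inr ⟨α, hαS, hsup' ▸ hmem, htail⟩)
          · rw [heqα]
            exact heE (hSsubE hαS)
        · push_neg at hc2
          set T := {α | α ∈ S ∧ ∃ y ∈ s, b < y ∧ y ∈ D α ∧ sSup (e ∩ Set.Iio α) ≤ y}
            with hTdef
          have hTe : T ⊆ e := fun α hα => hSsubE hα.1
          have hTσ : ∀ α ∈ T, α < sSup s := fun α hα => hc2 α hα.1 hα.2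
          have hTne : T.Nonempty := by
            obtain ⟨y, hy, hby⟩ := hcof b hbσ
            obtain ⟨α, hαS, hyD, hyt⟩ := hkey y hy hby
            exact ⟨α, hαS, y, hy, hby, hyD, hyt⟩
          have hTbdd : BddAbove T := ⟨sSup s, fun α hα => (hTσ α hα).le⟩
          have hTsup : sSup T = sSup s := by
            apply le_antisymm (csSup_le hTne (fun α hα => (hTσ α hα).le))
            by_contra h
            push_neg at h
            obtain ⟨y, hy, hlt⟩ := hcof (max b (sSup T)) (max_lt hbσ h)
            obtain ⟨α, hαS, hyD, hyt⟩ :=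
              hkey y hy (lt_of_le_of_lt (le_max_left _ _) hlt)
            have hαT : α ∈ T := ⟨hαS, y, hy, lt_of_le_of_lt (le_max_left _ _) hlt, hyD, hyt⟩
            have hboundα : α ≤ sSup T := le_csSup hTbdd hαT
            exact absurd ((lt_of_le_of_lt (le_max_right _ _) hlt).trans
              (hDlt α hαS y hyD)) (not_lt.2 hboundα)
          rw [← hTsup]
          exact heE (heCl T hTe hTne (hTsup ▸ hsδ))
  · -- order type bound
    intro γ ρ hγ hρ _hadd hρD
    haveI hsmE : Small.{0} E := small_subset hEIio
    haveI hsme : Small.{0} e := small_subset heIio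
    have hsmD : ∀ α, α ∈ S → Small.{0} (D α) :=
      fun α hα => small_subset (hD α hα).1
    set f : Ordinal → Ordinal := fun x =>
      if hx : x ∈ e then ρ * idx e ⟨x, hx⟩ + (if x ∈ S then otp (D x) else 0)
      else if hx2 : ∃ α, α ∈ S ∧ x ∈ D α ∧ sSup (e ∩ Set.Iio α) ≤ x then
        ρ * idx e ⟨hx2.choose, hSsubE hx2.choose_spec.1⟩ +
          @idx (D hx2.choose) (hsmD _ hx2.choose_spec.1) ⟨x, hx2.choose_spec.2.1⟩
      else 0 with hfdef
    have hfe : ∀ x (hx : x ∈ e),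
        f x = ρ * idx e ⟨x, hx⟩ + (if x ∈ S then otp (D x) else 0) := by
      intro x hx
      simp only [hfdef]
      rw [dif_pos hx]
    have hfd : ∀ x, x ∉ e → ∀ α, ∀ hα : α ∈ S, ∀ hxD : x ∈ D α,
        sSup (e ∩ Set.Iio α) ≤ x →
        f x = ρ * idx e ⟨α, hSsubE hα⟩ + @idx (D α) (hsmD α hα) ⟨x, hxD⟩ := by
      intro x hxe α hα hxD hxt
      have hex : ∃ α, α ∈ S ∧ x ∈ D α ∧ sSup (e ∩ Set.Iio α) ≤ x := ⟨α, hα, hxD, hxt⟩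
      simp only [hfdef]
      rw [dif_neg hxe, dif_pos hex]
      have hchoose : hex.choose = α :=
        huniq _ hex.choose_spec.1 _ hα x
          ⟨hex.choose_spec.2.1, hex.choose_spec.2.2⟩ ⟨hxD, hxt⟩
      subst hchoose
      rfl
    have hcoef : ∀ x, (if x ∈ S then otp (D x) else 0) < ρ := by
      intro x
      split
      · exact hρD x ‹x ∈ S›
      · exact hρ.pos
    have hidxe : ∀ x, ∀ hx : x ∈ e, idx e ⟨x, hx⟩ < γ :=
      fun x hx => lt_of_lt_of_le (idx_lt_otp e _) hγ
    have hidxD : ∀ α, ∀ hα : α ∈ S, ∀ x, ∀ hxD : x ∈ D α,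
        @idx (D α) (hsmD α hα) ⟨x, hxD⟩ < ρ :=
      fun α hα x hxD => lt_trans (@idx_lt_otp (D α) (hsmD α hα) ⟨x, hxD⟩) (hρD α hα)
    have hmono : ∀ x ∈ E, ∀ y ∈ E, x < y → f x < f y := by
      intro x hxE y hyE hxy
      by_cases hxe : x ∈ e <;> by_cases hye : y ∈ e
      · rw [hfe x hxe, hfe y hye]
        exact (mul_add_lt (hcoef x) (idx_lt_idx e (x := ⟨x, hxe⟩) (y := ⟨y, hye⟩) hxy)).trans_le (le_self_add)
      · obtain ⟨α, hαS, hyD, hyt⟩ := ((hEmem y).1 hyE).resolve_left hye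
        rw [hfe x hxe, hfd y hye α hαS hyD hyt]
        have hxα : x < α := hxy.trans (hDlt α hαS y hyD)
        exact (mul_add_lt (hcoef x) (idx_lt_idx e (x := ⟨x, hxe⟩) (y := ⟨α, hSsubE hαS⟩) hxα)).trans_le (le_self_add)
      · obtain ⟨α, hαS, hxD, hxt⟩ := ((hEmem x).1 hxE).resolve_left hxe
        rw [hfd x hxe α hαS hxD hxt]
        have hαy : α ≤ y := by
          by_contra h
          push_neg at h
          exact absurd ((hle_s0 α y hye h).trans hxt) (not_le.2 hxy)
        rcases hαy.lt_or_eq with h | h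
        · rw [hfe y hye]
          exact (mul_add_lt (hidxD α hαS x hxD) (idx_lt_idx e (x := ⟨α, hSsubE hαS⟩) (y := ⟨y, hye⟩) h)).trans_le
            (le_self_add)
        · subst h
          rw [hfe α hye, if_pos hαS]
          exact add_lt_add_right (@idx_lt_otp (D α) (hsmD α hαS) ⟨x, hxD⟩) _
      · obtain ⟨α, hαS, hxD, hxt⟩ := ((hEmem x).1 hxE).resolve_left hxe
        obtain ⟨α', hα'S, hyD, hyt⟩ := ((hEmem y).1 hyE).resolve_left hye
        rw [hfd x hxe α hαS hxD hxt, hfd y hye α' hα'S hyD hyt]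
        rcases eq_or_ne α α' with rfl | hne
        · exact add_lt_add_right (@idx_lt_idx (D α) (hsmD α hαS) ⟨x, hxD⟩ ⟨y, hyD⟩ hxy) _
        · have hαα' : α < α' := by
            rcases hne.lt_or_gt with h | h
            · exact h
            · exact absurd ((hle_s0 α α' (hSsubE hα'S) h).trans hxt)
                (not_le.2 ((hDlt α' hα'S y hyD).trans_le' hxy.le))
          exact (mul_add_lt (hidxD α hαS x hxD) (idx_lt_idx e (x := ⟨α, hSsubE hαS⟩) (y := ⟨α', hSsubE hα'S⟩) hαα')).trans_le
            (le_self_add)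
    have hbound : ∀ x ∈ E, f x < ρ * γ := by
      intro x hxE
      by_cases hxe : x ∈ e
      · rw [hfe x hxe]
        exact mul_add_lt (hcoef x) (hidxe x hxe)
      · obtain ⟨α, hαS, hxD, hxt⟩ := ((hEmem x).1 hxE).resolve_left hxe
        rw [hfd x hxe α hαS hxD hxt]
        exact mul_add_lt (hidxD α hαS x hxD) (hidxe α (hSsubE hαS))
    exact otp_le_of hmono hbound
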